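/- Let δ ≥ 3 and let (δ, K₁, K₂, C₀, C₁) be admissible parameters in Case III with K₁ + 2K₂ = 2δ − 1, i.e. additionally satisfying K₁ < ∞, C > 2δ + K₁, 3K₂ ≥ 2δ, and C ≥ 2δ + K₁ + 2 (where C = min(C₀,C₁)). Then K₁ < K₂, K₁ < 2δ/3, and there exists an integer M with K₁ < M and max(K₁, ⌈δ/2⌉) ≤ M ≤ min(K₂, ⌊(C−δ−1)/2⌋). -/
import Mathlib

/-- For admissible parameters in Case III with `K₁ + 2K₂ = 2δ − 1` (so in particular
`C > 2δ + K₁`, `3K₂ ≥ 2δ`, `C ≥ 2δ + K₁ + 2` where `C = min(C₀,C₁)`), one has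
`K₁ < K₂`, `K₁ < 2δ/3`, and there exists a magic distance `M` with `K₁ < M`. -/
theorem stmt1 (δ K₁ K₂ C₀ C₁ : ℕ) (hδ : 3 ≤ δ)
    (hK₁ : 1 ≤ K₁) (hK₁₂ : K₁ ≤ K₂) (hK₂ : K₂ ≤ 2 * δ)
    (hC : 2 * δ + K₁ < min C₀ C₁)
    (heq : K₁ + 2 * K₂ = 2 * δ - 1)
    (h3K₂ : 2 * δ ≤ 3 * K₂)
    (hC2 : 2 * δ + K₁ + 2 ≤ min C₀ C₁) :
    K₁ < K₂ ∧ 3 * K₁ < 2 * δ ∧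
      ∃ M : ℕ, K₁ < M ∧ max K₁ ((δ + 1) / 2) ≤ M ∧
        M ≤ min K₂ ((min C₀ C₁ - δ - 1) / 2) := by
  refine ⟨by omega, by omega, max (K₁ + 1) ((δ + 1) / 2), ?_, ?_, ?_⟩ <;>
    simp only [le_max_iff, max_le_iff, le_min_iff, lt_max_iff] <;> omega
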